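/- arXiv:cs/0408043 — 2 statements merged into one kernel-verified Lean document; each statement's English description precedes it below -/
import Mathlib

section
/- Every comeager subset of Cantor space that is a countable union of countable intersections of open sets, with each intersection of open sets dense in some basic open interval, contains a computable sequence; consequently, the class of 1-generic sequences is not Sigma^0_3. -/
open Filter Topology

abbrev Cantor := ℕ → Bool

/-- The length-`n` prefix of an infinite binary sequence, as a list. -/
def pref (X : ℕ → Bool) (n : ℕ) : List Bool := (List.range n).map X

/-- A predicate is computably enumerable (c.e., Σ⁰₁). -/
def CEPred {α : Type} [Primcodable α] (P : α → Prop) : Prop :=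
  ∃ f : α →. Unit, Partrec f ∧ ∀ a, P a ↔ (f a).Dom

/-- The basic open cylinder of a finite string. -/
def cyl (σ : List Bool) : Set Cantor := {A | pref A σ.length = σ}

/-- The effectively open (Σ⁰₁) set generated by a set of strings `S`:
those sequences some prefix of which lies in `S`. -/
def effOpen (S : List Bool → Prop) : Set Cantor := {A | ∃ k, S (pref A k)}

/-- `X` is a Σ⁰₃ class: a computably-indexed union of intersections of
uniformly computably enumerable open sets. -/
def IsSigma03Class (X : Set Cantor) : Prop :=
  ∃ S : ℕ → ℕ → List Bool → Prop,
    CEPred (fun p : ℕ × ℕ × List Bool => S p.1 p.2.1 p.2.2) ∧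
    X = ⋃ n, ⋂ m, effOpen (S n m)

/-- `X` is 1-generic with respect to the (monotone, computable approximation of
the) universal oracle halting predicate `h`: for every `e` some prefix of `X`
either makes machine `e` halt on input `e`, or no extension of it does. -/
def OneGeneric (h : ℕ → List Bool → ℕ → Bool) (X : Cantor) : Prop :=
  ∀ e : ℕ, ∃ n : ℕ,
    (∃ s, h e (pref X n) s = true) ∨
    (∀ τ : List Bool, pref X n <+: τ → ∀ s, h e τ s = false)

set_option maxHeartbeats 1000000

@[simp] lemma pref_length (A : Cantor) (n : ℕ) : (pref A n).length = n := by simp [pref]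

@[simp] lemma getElem_pref (A : Cantor) (n i : ℕ) (h : i < (pref A n).length) :
    (pref A n)[i] = A i := by simp [pref]

lemma pref_take (A : Cantor) {i j : ℕ} (hij : i ≤ j) : (pref A j).take i = pref A i := by
  simp [pref, ← List.map_take, List.take_range, Nat.min_eq_left hij]

lemma pref_prefix (A : Cantor) {i j : ℕ} (hij : i ≤ j) : pref A i <+: pref A j := by
  rw [← pref_take A hij]; exact List.take_prefix _ _

lemma pref_eq_iff {A B : Cantor} {n : ℕ} : pref A n = pref B n ↔ ∀ i < n, A i = B i := by
  constructor
  · intro h i hi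
    have h1 : (pref A n)[i]'(by simpa using hi) = (pref B n)[i]'(by simpa using hi) :=
      List.getElem_of_eq h _
    simpa using h1
  · intro h
    refine List.ext_getElem (by simp) fun i h1 h2 => ?_
    simpa using h i (by simpa using h1)

def extSeq (τ : List Bool) : Cantor := fun i => τ.getD i false

lemma pref_extSeq (τ : List Bool) : pref (extSeq τ) τ.length = τ := by
  refine List.ext_getElem (by simp) fun i h1 h2 => ?_
  simp [extSeq, List.getElem?_eq_getElem h2]

lemma pref_eq_of_prefix {A : Cantor} {σ τ : List Bool} (h : σ <+: τ)
    (hA : pref A τ.length = τ) : pref A σ.length = σ := by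
  have ht := pref_take A h.length_le
  rw [hA] at ht
  rw [← ht, ← List.prefix_iff_eq_take.1 h]

lemma mem_cyl_self (τ : List Bool) : extSeq τ ∈ cyl τ := pref_extSeq τ

lemma cyl_mono {σ τ : List Bool} (h : σ <+: τ) : cyl τ ⊆ cyl σ := fun _ hA =>
  pref_eq_of_prefix h hA

lemma mem_cyl_iff' {A : Cantor} {σ : List Bool} :
    A ∈ cyl σ ↔ ∀ i < σ.length, A i = σ.getD i false := by
  constructor
  · intro h i hi
    have h2 : pref A σ.length = pref (extSeq σ) σ.length := by rw [pref_extSeq]; exact h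
    exact pref_eq_iff.1 h2 i hi
  · intro h
    have : pref A σ.length = pref (extSeq σ) σ.length := pref_eq_iff.2 h
    show pref A σ.length = σ
    rw [this, pref_extSeq]

lemma isOpen_cyl (σ : List Bool) : IsOpen (cyl σ) := by
  have : cyl σ = ⋂ i ∈ Finset.range σ.length, {A : Cantor | A i = σ.getD i false} := by
    ext A
    simp only [Set.mem_iInter, Finset.mem_range, Set.mem_setOf_eq]
    exact mem_cyl_iff'
  rw [this]
  refine isOpen_biInter_finset fun i _ => ?_
  have h2 : {A : Cantor | A i = σ.getD i false} =
      (fun A : Cantor => A i) ⁻¹' {σ.getD i false} := rfl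
  rw [h2]
  exact (isOpen_discrete _).preimage (continuous_apply i)

lemma exists_cyl_subset {U : Set Cantor} (hU : IsOpen U) {x : Cantor} (hx : x ∈ U) :
    ∃ k, cyl (pref x k) ⊆ U := by
  obtain ⟨I, u, hu, hsub⟩ := isOpen_pi_iff.1 hU x hx
  refine ⟨(I.sup id) + 1, fun A hA => hsub fun i hi => ?_⟩
  have hik : i < I.sup id + 1 := Nat.lt_succ_of_le (Finset.le_sup (f := id) hi)
  have hAx : pref A (I.sup id + 1) = pref x (I.sup id + 1) := by
    have := hA
    simpa [cyl] using this
  rw [pref_eq_iff.1 hAx i hik]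
  exact (hu i hi).2

lemma mem_effOpen_of_prefix {S : List Bool → Prop} {A : Cantor} {σ : List Bool}
    (hσ : S σ) (hA : pref A σ.length = σ) : A ∈ effOpen S := ⟨σ.length, by rwa [hA]⟩

lemma isOpen_effOpen (S : List Bool → Prop) : IsOpen (effOpen S) := by
  have : effOpen S = ⋃ σ ∈ {σ : List Bool | S σ}, cyl σ := by
    ext A
    simp only [effOpen, Set.mem_setOf_eq, Set.mem_iUnion]
    constructor
    · rintro ⟨k, hk⟩
      exact ⟨pref A k, hk, by show pref A _ = _; rw [pref_length]⟩
    · rintro ⟨σ, hσ, hA⟩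
      exact ⟨σ.length, by rwa [show pref A σ.length = σ from hA]⟩
  rw [this]
  exact isOpen_biUnion fun σ _ => isOpen_cyl σ


lemma dense_genericOpen (h : ℕ → List Bool → ℕ → Bool) (e : ℕ) :
    Dense (effOpen (fun ρ => (∃ s, h e ρ s = true) ∨
      ∀ τ, ρ <+: τ → ∀ s, h e τ s = false)) := by
  rw [dense_iff_inter_open]
  rintro U hU ⟨x, hx⟩
  obtain ⟨k, hk⟩ := exists_cyl_subset hU hx
  set τ := pref x k with hτ
  by_cases hc : ∃ τ' s, τ <+: τ' ∧ h e τ' s = true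
  · obtain ⟨τ', s, hpre, hs⟩ := hc
    exact ⟨extSeq τ', hk (cyl_mono hpre (mem_cyl_self τ')),
      mem_effOpen_of_prefix (Or.inl ⟨s, hs⟩) (pref_extSeq τ')⟩
  · push_neg at hc
    refine ⟨extSeq τ, hk (mem_cyl_self τ), mem_effOpen_of_prefix (Or.inr ?_) (pref_extSeq τ)⟩
    intro τ'' hpre s
    simpa using hc τ'' s hpre

lemma generics_residual (h : ℕ → List Bool → ℕ → Bool) :
    {X : Cantor | OneGeneric h X} ∈ residual Cantor := by
  have heq : {X : Cantor | OneGeneric h X} = ⋂ e, effOpen (fun ρ =>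
      (∃ s, h e ρ s = true) ∨ ∀ τ, ρ <+: τ → ∀ s, h e τ s = false) := by
    ext X
    simp only [Set.mem_setOf_eq, Set.mem_iInter, OneGeneric, effOpen]
  rw [heq]
  exact countable_iInter_mem.2 fun e =>
    residual_of_dense_open (isOpen_effOpen _) (dense_genericOpen h e)

lemma nowhereDense_of_no_dense_cyl {P : Set Cantor}
    (hP : ∀ σ : List Bool, ∃ τ, σ <+: τ ∧ ∀ A ∈ P, pref A τ.length ≠ τ) :
    IsNowhereDense P := by
  rw [IsNowhereDense, ← Set.not_nonempty_iff_eq_empty]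
  rintro ⟨x, hx⟩
  obtain ⟨k, hk⟩ := exists_cyl_subset isOpen_interior hx
  obtain ⟨τ, hpre, hτ⟩ := hP (pref x k)
  have hmem : extSeq τ ∈ closure P := interior_subset (hk (cyl_mono hpre (mem_cyl_self τ)))
  obtain ⟨A, hA⟩ := mem_closure_iff.1 hmem (cyl τ) (isOpen_cyl τ) (mem_cyl_self τ)
  exact hτ A hA.2 hA.1

/-! ### Computable prefix check -/

def pchk (σ ρ : List Bool) : Bool :=
  decide (σ.length ≤ ρ.length) && decide (pref (extSeq ρ) σ.length = σ)

lemma pchk_iff {σ ρ : List Bool} : pchk σ ρ = true ↔ σ <+: ρ := by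
  rw [pchk, Bool.and_eq_true, decide_eq_true_iff, decide_eq_true_iff]
  constructor
  · rintro ⟨hlen, heq⟩
    have h1 := pref_take (extSeq ρ) hlen
    rw [pref_extSeq, heq] at h1
    exact List.prefix_iff_eq_take.2 h1.symm
  · intro hp
    refine ⟨hp.length_le, ?_⟩
    have h1 := pref_take (extSeq ρ) hp.length_le
    rw [pref_extSeq] at h1
    rw [← h1]
    exact (List.prefix_iff_eq_take.1 hp).symm

lemma pchk_primrec : Primrec₂ pchk := by
  have h1 : Primrec fun p : List Bool × List Bool => decide (p.1.length ≤ p.2.length) :=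
    (Primrec.nat_le.comp (Primrec.list_length.comp .fst) (Primrec.list_length.comp .snd)).decide
  have h2 : Primrec fun p : List Bool × List Bool => pref (extSeq p.2) p.1.length :=
    Primrec.list_map (Primrec.list_range.comp (Primrec.list_length.comp .fst))
      (Primrec.to₂ ((Primrec.list_getD false).comp (Primrec.snd.comp .fst) .snd))
  have h3 : Primrec fun p : List Bool × List Bool =>
      decide (pref (extSeq p.2) p.1.length = p.1) := (Primrec.eq.comp h2 .fst).decide
  exact Primrec.to₂ (Primrec.and.comp h1 h3)

lemma CEPred.exists_decider {α : Type} [Primcodable α] {P : α → Prop} (hP : CEPred P) :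
    ∃ d : α → ℕ → Bool, Computable₂ d ∧ ∀ a, P a ↔ ∃ s, d a s = true := by
  obtain ⟨f, hf, hfP⟩ := hP
  obtain ⟨c, hc⟩ := Nat.Partrec.Code.exists_code.1 hf
  refine ⟨fun a s => (Nat.Partrec.Code.evaln s c (Encodable.encode a)).isSome, ?_, ?_⟩
  · exact Primrec₂.to_comp (Primrec.to₂ (Primrec.option_isSome.comp
      (Nat.Partrec.Code.primrec_evaln.comp
        ((Primrec.snd.pair (Primrec.const c)).pair (Primrec.encode.comp Primrec.fst)))))
  · intro a
    rw [hfP]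
    have hval : Nat.Partrec.Code.eval c (Encodable.encode a) =
        (f a).map Encodable.encode := by
      rw [hc]; simp [Encodable.encodek]
    constructor
    · intro hdom
      obtain ⟨x, hx⟩ := Part.dom_iff_mem.1 hdom
      have hm : Encodable.encode x ∈ Nat.Partrec.Code.eval c (Encodable.encode a) := by
        rw [hval]; exact Part.mem_map _ hx
      obtain ⟨s, hs⟩ := Nat.Partrec.Code.evaln_complete.1 hm
      exact ⟨s, by rw [Option.isSome_iff_exists]; exact ⟨_, hs⟩⟩
    · rintro ⟨s, hs⟩
      obtain ⟨x, hx⟩ := Option.isSome_iff_exists.1 hs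
      have hm := Nat.Partrec.Code.evaln_sound (show x ∈ _ from hx)
      rw [hval] at hm
      obtain ⟨y, hy, -⟩ := (Part.mem_map_iff _).1 hm
      exact Part.dom_iff_mem.2 ⟨y, hy⟩

/-! ### The finite-extension construction -/

def extD (k : ℕ) : List Bool := ((Encodable.decode (α := List Bool × ℕ) k).getD ([], 0)).1

def timD (k : ℕ) : ℕ := ((Encodable.decode (α := List Bool × ℕ) k).getD ([], 0)).2

def cndD (d : ℕ × List Bool → ℕ → Bool) (m : ℕ) (ρ : List Bool) (k : ℕ) : Bool :=
  (pchk (extD k) ρ || pchk ρ (extD k)) && d (m, extD k) (timD k)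

def stpD (ρ : List Bool) (k : ℕ) : List Bool :=
  cond (pchk ρ (extD k)) (extD k ++ [false]) (ρ ++ [false])

open Classical in
noncomputable def seqD (d : ℕ × List Bool → ℕ → Bool) (σ : List Bool) : ℕ → List Bool :=
  fun m => Nat.rec σ (fun y ρ => if h : ∃ k, cndD d y ρ k = true then stpD ρ (Nat.find h)
    else ρ ++ [false]) m

@[simp] lemma extD_encode (π : List Bool) (s : ℕ) : extD (Encodable.encode (π, s)) = π := by
  simp [extD, Encodable.encodek]

@[simp] lemma timD_encode (π : List Bool) (s : ℕ) : timD (Encodable.encode (π, s)) = s := by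
  simp [timD, Encodable.encodek]

lemma prefix_stpD (ρ : List Bool) (k : ℕ) : ρ <+: stpD ρ k := by
  rw [stpD]
  cases hb : pchk ρ (extD k)
  · simp
  · simpa using (pchk_iff.1 hb).trans (List.prefix_append _ _)

lemma length_stpD (ρ : List Bool) (k : ℕ) : ρ.length + 1 ≤ (stpD ρ k).length := by
  rw [stpD]
  cases hb : pchk ρ (extD k)
  · simp
  · have := (pchk_iff.1 hb).length_le
    simp only [cond_true, List.length_append, List.length_cons, List.length_nil]
    omega

open Classical in
lemma seqD_succ (d : ℕ × List Bool → ℕ → Bool) (σ : List Bool) (m : ℕ) :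
    seqD d σ (m + 1) =
      (if h : ∃ k, cndD d m (seqD d σ m) k = true then stpD (seqD d σ m) (Nat.find h)
       else seqD d σ m ++ [false]) := rfl

lemma prefix_seqD_succ (d : ℕ × List Bool → ℕ → Bool) (σ : List Bool) (m : ℕ) :
    seqD d σ m <+: seqD d σ (m + 1) := by
  rw [seqD_succ]
  split
  · exact prefix_stpD _ _
  · exact List.prefix_append _ _

lemma prefix_seqD (d : ℕ × List Bool → ℕ → Bool) (σ : List Bool) {i j : ℕ} (hij : i ≤ j) :
    seqD d σ i <+: seqD d σ j := by
  induction hij with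
  | refl => exact List.prefix_refl _
  | step _ ih => exact ih.trans (prefix_seqD_succ _ _ _)

lemma le_length_seqD (d : ℕ × List Bool → ℕ → Bool) (σ : List Bool) (m : ℕ) :
    m ≤ (seqD d σ m).length := by
  induction m with
  | zero => exact Nat.zero_le _
  | succ m ih =>
    have h2 : (seqD d σ m).length + 1 ≤ (seqD d σ (m + 1)).length := by
      rw [seqD_succ]
      split
      · exact length_stpD _ _
      · simp
    omega

lemma construction {S : ℕ → List Bool → Prop} {d : ℕ × List Bool → ℕ → Bool}
    (hd : Computable₂ d)
    (hdS : ∀ m π, S m π ↔ ∃ s, d (m, π) s = true)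
    (σ : List Bool)
    (hdense : ∀ τ : List Bool, σ <+: τ →
      ∃ A ∈ ⋂ m, effOpen (S m), pref A τ.length = τ) :
    ∃ A ∈ ⋂ m, effOpen (S m), Computable A := by
  classical
  have hex : ∀ m ρ, σ <+: ρ → ∃ k, cndD d m ρ k = true := by
    intro m ρ hρ
    obtain ⟨A, hA, hpre⟩ := hdense ρ hρ
    obtain ⟨j, hj⟩ := Set.mem_iInter.1 hA m
    obtain ⟨s, hs⟩ := (hdS m _).1 hj
    refine ⟨Encodable.encode (pref A j, s), ?_⟩
    rw [cndD, extD_encode, timD_encode, Bool.and_eq_true, Bool.or_eq_true, pchk_iff, pchk_iff]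
    refine ⟨?_, hs⟩
    rcases le_total j ρ.length with hle | hle
    · left
      have := pref_prefix A hle
      rwa [hpre] at this
    · right
      have := pref_prefix A hle
      rwa [hpre] at this
  have hσq : ∀ m, σ <+: seqD d σ m := fun m => prefix_seqD d σ (Nat.zero_le m)
  have hlen := le_length_seqD d σ
  have hmono : ∀ {i j : ℕ}, i ≤ j → seqD d σ i <+: seqD d σ j := fun h => prefix_seqD d σ h
  have key : ∀ m, pref (fun i => (seqD d σ (i + 1)).getD i false) (seqD d σ m).length
      = seqD d σ m := by
    intro m
    refine List.ext_getElem (by simp) fun i h1 h2 => ?_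
    rw [getElem_pref]
    show (seqD d σ (i + 1)).getD i false = (seqD d σ m)[i]
    rcases le_total (i + 1) m with hle | hle
    · have hp := hmono hle
      have hi1 : i < (seqD d σ (i + 1)).length :=
        lt_of_lt_of_le (Nat.lt_succ_self i) (hlen (i + 1))
      rw [List.getD_eq_getElem _ _ hi1, hp.getElem hi1]
    · have hp := hmono hle
      have hi1 : i < (seqD d σ (i + 1)).length := lt_of_lt_of_le h2 hp.length_le
      rw [List.getD_eq_getElem _ _ hi1]
      exact (hp.getElem h2).symm
  refine ⟨fun i => (seqD d σ (i + 1)).getD i false, ?_, ?_⟩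
  · refine Set.mem_iInter.2 fun m => ?_
    have h := hex m (seqD d σ m) (hσq m)
    have hstep : seqD d σ (m + 1) = stpD (seqD d σ m) (Nat.find h) := by
      rw [seqD_succ, dif_pos h]
    have hk : cndD d m (seqD d σ m) (Nat.find h) = true := Nat.find_spec h
    rw [cndD, Bool.and_eq_true, Bool.or_eq_true, pchk_iff, pchk_iff] at hk
    have hSm : S m (extD (Nat.find h)) := (hdS m _).2 ⟨timD (Nat.find h), hk.2⟩
    have hpre : extD (Nat.find h) <+: seqD d σ (m + 1) := by
      rcases hk.1 with hc | hc
      · refine hc.trans ?_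
        rw [hstep]; exact prefix_stpD _ _
      · have hb : pchk (seqD d σ m) (extD (Nat.find h)) = true := pchk_iff.2 hc
        rw [hstep, stpD, hb]
        simpa using List.prefix_append _ _
    exact mem_effOpen_of_prefix hSm (pref_eq_of_prefix hpre (key (m + 1)))
  · -- Computability
    have hext : Computable extD :=
      Computable.fst.comp ((Primrec.option_getD.to_comp).comp Computable.decode
        (Computable.const ([], 0)))
    have htim : Computable timD :=
      Computable.snd.comp ((Primrec.option_getD.to_comp).comp Computable.decode
        (Computable.const ([], 0)))
    have hpchk : Computable₂ pchk := pchk_primrec.to_comp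
    have hcnd : Computable₂ fun (p : ℕ × List Bool) (k : ℕ) => cndD d p.1 p.2 k := by
      have c1 : Computable fun x : (ℕ × List Bool) × ℕ => pchk (extD x.2) x.1.2 :=
        hpchk.comp (hext.comp .snd) (Computable.snd.comp .fst)
      have c2 : Computable fun x : (ℕ × List Bool) × ℕ => pchk x.1.2 (extD x.2) :=
        hpchk.comp (Computable.snd.comp .fst) (hext.comp .snd)
      have c3 : Computable fun x : (ℕ × List Bool) × ℕ => d (x.1.1, extD x.2) (timD x.2) :=
        hd.comp ((Computable.fst.comp Computable.fst).pair (hext.comp .snd)) (htim.comp .snd)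
      have hc : Computable fun x : (ℕ × List Bool) × ℕ => cndD d x.1.1 x.1.2 x.2 :=
        (Primrec.and.to_comp.comp (Primrec.or.to_comp.comp c1 c2) c3).of_eq
          (fun x => by simp [cndD])
      exact hc
    have hstp : Computable₂ stpD := by
      have c1 : Computable fun p : List Bool × ℕ => pchk p.1 (extD p.2) :=
        hpchk.comp .fst (hext.comp .snd)
      have c2 : Computable fun p : List Bool × ℕ => extD p.2 ++ [false] :=
        Primrec.list_append.to_comp.comp (hext.comp .snd) (Computable.const [false])
      have c3 : Computable fun p : List Bool × ℕ => p.1 ++ [false] :=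
        Primrec.list_append.to_comp.comp .fst (Computable.const [false])
      exact Computable.to₂ (Computable.cond c1 c2 c3)
    have hps : Partrec fun p : ℕ × List Bool =>
        (Nat.rfind fun k => Part.some (cndD d p.1 p.2 k)).map fun k => stpD p.2 k := by
      have hg : Computable fun x : (ℕ × List Bool) × ℕ => stpD x.1.2 x.2 :=
        hstp.comp (Computable.snd.comp .fst) .snd
      exact (Partrec.rfind hcnd.partrec₂).map hg
    have hG := Partrec.nat_rec (f := fun m : ℕ => m)
      (g := fun _ : ℕ => (Part.some σ : Part (List Bool)))
      (h := fun (_ : ℕ) (p : ℕ × List Bool) =>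
        (Nat.rfind fun k => Part.some (cndD d p.1 p.2 k)).map fun k => stpD p.2 k)
      Computable.id (Partrec.const' _) (by
        have hh : Partrec fun x : ℕ × (ℕ × List Bool) =>
            (Nat.rfind fun k => Part.some (cndD d x.2.1 x.2.2 k)).map fun k => stpD x.2.2 k :=
          hps.comp Computable.snd
        exact hh)
    have hq : Computable (seqD d σ) := by
      refine Partrec.of_eq_tot hG ?_
      intro m
      induction m with
      | zero => exact Part.mem_some σ
      | succ m ih =>
        refine Part.mem_bind_iff.2 ⟨seqD d σ m, ih, ?_⟩
        have h := hex m (seqD d σ m) (hσq m)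
        refine (Part.mem_map_iff _).2 ⟨Nat.find h, ?_, ?_⟩
        · refine Nat.mem_rfind.2 ⟨?_, ?_⟩
          · exact Part.mem_some_iff.2 (Nat.find_spec h).symm
          · intro j hj
            have hm := Nat.find_min h hj
            refine Part.mem_some_iff.2 ?_
            revert hm
            cases cndD d m (seqD d σ m) j <;> simp
        · rw [seqD_succ, dif_pos h]
    exact (Primrec.list_getD false).to_comp.comp (hq.comp Computable.succ) Computable.id


lemma main_lemma (S : ℕ → ℕ → List Bool → Prop)
    (hS : CEPred (fun p : ℕ × ℕ × List Bool => S p.1 p.2.1 p.2.2)) (n : ℕ) (σ : List Bool)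
    (hdense : ∀ τ : List Bool, σ <+: τ →
      ∃ A ∈ ⋂ m, effOpen (S n m), pref A τ.length = τ) :
    ∃ A ∈ ⋂ m, effOpen (S n m), Computable A := by
  obtain ⟨d0, hd0, hd0S⟩ := hS.exists_decider
  have hd : Computable₂ fun (p : ℕ × List Bool) (s : ℕ) => d0 (n, p.1, p.2) s := by
    have hc : Computable fun x : (ℕ × List Bool) × ℕ => d0 (n, x.1.1, x.1.2) x.2 :=
      hd0.comp ((Computable.const n).pair
        ((Computable.fst.comp .fst).pair (Computable.snd.comp .fst))) .snd
    exact hc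
  exact construction hd (fun m π => hd0S (n, m, π)) σ hdense


/-- Every comeager subset of Cantor space which is a countable union of
countable intersections of uniformly c.e. open sets, each intersection being
dense in some basic open interval, contains a computable sequence.
Consequently, the class of 1-generic sequences is not Σ⁰₃. -/
theorem comeager_sigma03_computable_member_and_generics_not_Sigma03
    (h : ℕ → List Bool → ℕ → Bool)
    (hcomp : Computable fun p : ℕ × List Bool × ℕ => h p.1 p.2.1 p.2.2)
    (hmono : ∀ e σ τ s t, σ <+: τ → s ≤ t → h e σ s = true → h e τ t = true)
    (hnoncomp : ∀ X : Cantor, OneGeneric h X → ¬ Computable X) :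
    (∀ S : ℕ → ℕ → List Bool → Prop,
        CEPred (fun p : ℕ × ℕ × List Bool => S p.1 p.2.1 p.2.2) →
        ∀ X : Set Cantor, X = ⋃ n, ⋂ m, effOpen (S n m) →
        X ∈ residual Cantor →
        (∀ n, ∃ σ : List Bool, ∀ τ : List Bool, σ <+: τ →
            ∃ A ∈ ⋂ m, effOpen (S n m), pref A τ.length = τ) →
        ∃ A ∈ X, Computable A) ∧
    ¬ IsSigma03Class {X : Cantor | OneGeneric h X} := by
  constructor
  · intro S hS X hX hres hdense
    obtain ⟨σ, hσ⟩ := hdense 0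
    obtain ⟨A, hA, hAc⟩ := main_lemma S hS 0 σ hσ
    exact ⟨A, hX ▸ Set.mem_iUnion.2 ⟨0, hA⟩, hAc⟩
  · rintro ⟨S, hS, hEq⟩
    by_cases hdd : ∃ n σ, ∀ τ : List Bool, σ <+: τ →
        ∃ A ∈ ⋂ m, effOpen (S n m), pref A τ.length = τ
    · obtain ⟨n, σ, hσ⟩ := hdd
      obtain ⟨A, hA, hAc⟩ := main_lemma S hS n σ hσ
      have hgen : A ∈ {X : Cantor | OneGeneric h X} := by
        rw [hEq]; exact Set.mem_iUnion.2 ⟨n, hA⟩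
      exact hnoncomp A hgen hAc
    · push_neg at hdd
      have hmeag : IsMeagre (⋃ n, ⋂ m, effOpen (S n m)) := by
        refine isMeagre_iUnion fun n => ?_
        refine isMeagre_iff_countable_union_isNowhereDense.2
          ⟨{⋂ m, effOpen (S n m)}, ?_, Set.countable_singleton _, by simp⟩
        rintro t rfl
        exact nowhereDense_of_no_dense_cyl fun σ => hdd n σ
      rw [← hEq] at hmeag
      have hres := generics_residual h
      have hmem : (∅ : Set Cantor) ∈ residual Cantor := by
        have := Filter.inter_mem hres hmeag
        simpa using this
      have := (dense_of_mem_residual hmem).nonempty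
      simpa using this
end

section
/- There exists a class of infinite binary sequences in Sigma^0_1[Pi^0_1] that is not Pi^0_2. -/
open Filter Topology

/-- A predicate (of the outer quantified numbers together with a finite prefix
of the sequence) is Δ⁰₁, i.e. computable. -/
def DeltaPred (P : List ℕ → List Bool → Prop) : Prop :=
  ComputablePred fun p : List ℕ × List Bool => P p.1 p.2

/-- A predicate is Π⁰₁, i.e. co-computably enumerable. -/
def PiPred (P : List ℕ → List Bool → Prop) : Prop :=
  CEPred fun p : List ℕ × List Bool => ¬ P p.1 p.2

/-- `AltQ n b P ks A`: `n` alternating quantifiers (starting with `∃` if `b`,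
with `∀` otherwise) applied to the predicate `P`, where the innermost
quantified variable is the length of the prefix of `A` handed to `P`, and `ks`
accumulates the previously quantified numbers. -/
def AltQ : ℕ → Bool → (List ℕ → List Bool → Prop) → List ℕ → Cantor → Prop
  | 0, _, P, ks, _ => P ks []
  | 1, true, P, ks, A => ∃ k, P ks (pref A k)
  | 1, false, P, ks, A => ∀ k, P ks (pref A k)
  | n+2, true, P, ks, A => ∃ k, AltQ (n+1) false P (ks ++ [k]) A
  | n+2, false, P, ks, A => ∀ k, AltQ (n+1) true P (ks ++ [k]) A

/-- `X ∈ Σ⁰ₙ[C]`: definable with `n` alternating quantifiers starting with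
`∃`, over some predicate in the class `C`. -/
def SigmaIn (n : ℕ) (C : (List ℕ → List Bool → Prop) → Prop) (X : Set Cantor) : Prop :=
  ∃ P, C P ∧ ∀ A : Cantor, A ∈ X ↔ AltQ n true P [] A

/-- `X ∈ Π⁰ₙ[C]`: definable with `n` alternating quantifiers starting with
`∀`, over some predicate in the class `C`. -/
def PiIn (n : ℕ) (C : (List ℕ → List Bool → Prop) → Prop) (X : Set Cantor) : Prop :=
  ∃ P, C P ∧ ∀ A : Cantor, A ∈ X ↔ AltQ n false P [] A

namespace S1P1Aux

open Nat.Partrec (Code)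
open Nat.Partrec.Code
open Primrec

/-! ### Bool/list helpers -/

def stepF (a : ℕ) (b : Bool) : ℕ :=
  cond b (if a = 2 then 2 else 1) (if a = 0 then 0 else 2)

def good (σ : List Bool) : Bool := decide (σ.foldl stepF 0 = 1)

def cF (σ : List Bool) : ℕ := σ.foldl (fun a b => cond b a (a + 1)) 0

def cT (σ : List Bool) : ℕ := σ.foldl (fun a b => cond b (a + 1) a) 0

/-- The co-c.e. set of strings generating our Σ⁰₁[Π⁰₁] class. -/
def T (σ : List Bool) : Prop :=
  good σ = true ∧ ¬ ((Denumerable.ofNat Code (cF σ)).eval (Nat.pred (cT σ))).Dom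

def Xset : Set Cantor := {A | ∃ k, T (pref A k)}

lemma foldl_stepF_false : ∀ n : ℕ, (List.replicate n false).foldl stepF 0 = 0
  | 0 => rfl
  | n + 1 => by
      simpa [List.replicate_succ, stepF] using foldl_stepF_false n

lemma foldl_stepF_true : ∀ n : ℕ, (List.replicate n true).foldl stepF 1 = 1
  | 0 => rfl
  | n + 1 => by
      simpa [List.replicate_succ, stepF] using foldl_stepF_true n

lemma good_form (n j : ℕ) :
    good (List.replicate n false ++ List.replicate (j + 1) true) = true := by
  simp [good, List.foldl_append, foldl_stepF_false, List.replicate_succ, stepF,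
    foldl_stepF_true]

lemma good_repl_false (n : ℕ) : good (List.replicate n false) = false := by
  simp [good, foldl_stepF_false]

lemma cF_foldl_false : ∀ (n a : ℕ),
    (List.replicate n false).foldl (fun a b => cond b a (a + 1)) a = a + n
  | 0, a => by simp
  | n + 1, a => by
      simp only [List.replicate_succ, List.foldl_cons, Bool.cond_false]
      rw [cF_foldl_false n (a + 1)]; omega

lemma cF_foldl_true : ∀ (n a : ℕ),
    (List.replicate n true).foldl (fun a b => cond b a (a + 1)) a = a
  | 0, a => by simp
  | n + 1, a => by
      simpa [List.replicate_succ] using cF_foldl_true n a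

lemma cT_foldl_false : ∀ (n a : ℕ),
    (List.replicate n false).foldl (fun a b => cond b (a + 1) a) a = a
  | 0, a => by simp
  | n + 1, a => by
      simpa [List.replicate_succ] using cT_foldl_false n a

lemma cT_foldl_true : ∀ (n a : ℕ),
    (List.replicate n true).foldl (fun a b => cond b (a + 1) a) a = a + n
  | 0, a => by simp
  | n + 1, a => by
      simp only [List.replicate_succ, List.foldl_cons, Bool.cond_true]
      rw [cT_foldl_true n (a + 1)]; omega

lemma cF_eq (n j : ℕ) : cF (List.replicate n false ++ List.replicate j true) = n := by
  simp [cF, List.foldl_append, cF_foldl_false, cF_foldl_true]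

lemma cT_eq (n j : ℕ) : cT (List.replicate n false ++ List.replicate j true) = j := by
  simp [cT, List.foldl_append, cT_foldl_false, cT_foldl_true]

lemma pref_eq (n : ℕ) : ∀ k : ℕ,
    pref (fun i => decide (n ≤ i)) k
      = List.replicate (min n k) false ++ List.replicate (k - n) true
  | 0 => by simp [pref]
  | k + 1 => by
      unfold pref
      rw [List.range_succ, List.map_append]
      have ih := pref_eq n k
      unfold pref at ih
      rw [ih]
      by_cases h : n ≤ k
      · have h1 : min n k = n := min_eq_left h
        have h2 : min n (k + 1) = n := min_eq_left (by omega)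
        have h3 : k + 1 - n = (k - n) + 1 := by omega
        rw [h1, h2, h3, List.replicate_succ' (n := k - n)]
        simp [h]
      · have h1 : min n k = k := min_eq_right (by omega)
        have h2 : min n (k + 1) = k + 1 := min_eq_right (by omega)
        have h3 : k + 1 - n = 0 := by omega
        have h4 : k - n = 0 := by omega
        rw [h1, h2, h3, h4, List.replicate_succ' (n := k)]
        simp [h]

/-- Membership of the canonical points `0^n 1^∞` in `Xset`. -/
lemma mem_Xset (n : ℕ) :
    (fun i => decide (n ≤ i)) ∈ Xset
      ↔ ∃ j, ¬ ((Denumerable.ofNat Code n).eval j).Dom := by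
  constructor
  · rintro ⟨k, hg, hd⟩
    rw [pref_eq] at hg hd
    by_cases hk : n < k
    · have h1 : min n k = n := min_eq_left (by omega)
      obtain ⟨j, hj⟩ : ∃ j, k - n = j + 1 := ⟨k - n - 1, by omega⟩
      rw [h1, hj] at hd
      rw [cF_eq, cT_eq] at hd
      exact ⟨j, by simpa using hd⟩
    · exfalso
      have h3 : k - n = 0 := by omega
      rw [h3] at hg
      simp only [List.replicate_zero, List.append_nil] at hg
      rw [good_repl_false] at hg
      exact Bool.false_ne_true hg
  · rintro ⟨j, hj⟩
    refine ⟨n + j + 1, ?_, ?_⟩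
    · rw [pref_eq]
      have h1 : min n (n + j + 1) = n := by omega
      have h2 : n + j + 1 - n = j + 1 := by omega
      rw [h1, h2]; exact good_form n j
    · rw [pref_eq]
      have h1 : min n (n + j + 1) = n := by omega
      have h2 : n + j + 1 - n = j + 1 := by omega
      rw [h1, h2, cF_eq, cT_eq]
      simpa using hj

/-! ### Primrec facts -/

lemma stepF_primrec : Primrec₂ stepF :=
  Primrec.cond Primrec.snd
    (Primrec.ite (PrimrecRel.comp Primrec.eq Primrec.fst (Primrec.const 2))
      (Primrec.const 2) (Primrec.const 1))
    (Primrec.ite (PrimrecRel.comp Primrec.eq Primrec.fst (Primrec.const 0))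
      (Primrec.const 0) (Primrec.const 2))

lemma st_primrec : Primrec fun σ : List Bool => σ.foldl stepF 0 :=
  Primrec.list_foldl .id (Primrec.const 0)
    ((stepF_primrec.comp (Primrec.fst.comp Primrec.snd)
      (Primrec.snd.comp Primrec.snd)).to₂)

lemma good_primrec : Primrec good :=
  (PrimrecRel.comp Primrec.eq st_primrec (Primrec.const 1)).decide

lemma cF_primrec : Primrec cF :=
  Primrec.list_foldl .id (Primrec.const 0)
    ((Primrec.cond (Primrec.snd.comp Primrec.snd) (Primrec.fst.comp Primrec.snd)
      (Primrec.succ.comp (Primrec.fst.comp Primrec.snd))).to₂)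

lemma cT_primrec : Primrec cT :=
  Primrec.list_foldl .id (Primrec.const 0)
    ((Primrec.cond (Primrec.snd.comp Primrec.snd)
      (Primrec.succ.comp (Primrec.fst.comp Primrec.snd))
      (Primrec.fst.comp Primrec.snd)).to₂)

/-! ### `all`/`any` via `foldl` -/

lemma foldl_cond_all {β : Type} (p : β → Bool) :
    ∀ (l : List β) (a : Bool),
      l.foldl (fun s b => cond s (p b) false) a = (a && l.all p)
  | [], a => by simp
  | x :: l, a => by
      rw [List.foldl_cons, foldl_cond_all p l, List.all_cons]
      cases a <;> simp

lemma foldl_cond_any {β : Type} (p : β → Bool) :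
    ∀ (l : List β) (a : Bool),
      l.foldl (fun s b => cond s true (p b)) a = (a || l.any p)
  | [], a => by simp
  | x :: l, a => by
      rw [List.foldl_cons, foldl_cond_any p l, List.any_cons]
      cases a <;> simp

lemma primrec_list_all {α β : Type} [Primcodable α] [Primcodable β]
    {f : α → List β} {p : α → β → Bool} (hf : Primrec f) (hp : Primrec₂ p) :
    Primrec fun a => (f a).all (p a) := by
  have h := Primrec.list_foldl (h := fun a (q : Bool × β) => cond q.1 (p a q.2) false)
    hf (Primrec.const true)
    ((Primrec.cond (Primrec.fst.comp Primrec.snd)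
      (hp.comp Primrec.fst (Primrec.snd.comp Primrec.snd))
      (Primrec.const false)).to₂)
  refine h.of_eq fun a => ?_
  exact (foldl_cond_all (p a) (f a) true).trans (Bool.true_and _)

lemma primrec_list_any {α β : Type} [Primcodable α] [Primcodable β]
    {f : α → List β} {p : α → β → Bool} (hf : Primrec f) (hp : Primrec₂ p) :
    Primrec fun a => (f a).any (p a) := by
  have h := Primrec.list_foldl (h := fun a (q : Bool × β) => cond q.1 true (p a q.2))
    hf (Primrec.const false)
    ((Primrec.cond (Primrec.fst.comp Primrec.snd)
      (Primrec.const true)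
      (hp.comp Primrec.fst (Primrec.snd.comp Primrec.snd))).to₂)
  refine h.of_eq fun a => ?_
  exact (foldl_cond_any (p a) (f a) false).trans (Bool.false_or _)

/-! ### The Σ⁰₁[Π⁰₁]-ness of `Xset` -/

def gfun (p : List ℕ × List Bool) (s : ℕ) : Bool :=
  cond (good p.2)
    ((evaln s (Denumerable.ofNat Code (cF p.2)) (Nat.pred (cT p.2))).isSome)
    true

lemma gfun_primrec : Primrec₂ gfun := by
  have hσ : Primrec fun q : (List ℕ × List Bool) × ℕ => q.1.2 :=
    Primrec.snd.comp Primrec.fst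
  exact (Primrec.cond (good_primrec.comp hσ)
    (Primrec.option_isSome.comp (primrec_evaln.comp
      ((Primrec.snd.pair ((Primrec.ofNat Code).comp (cF_primrec.comp hσ))).pair
        (Primrec.pred.comp (cT_primrec.comp hσ)))))
    (Primrec.const true)).to₂

lemma eval_dom_iff_evaln (c : Code) (x : ℕ) :
    (c.eval x).Dom ↔ ∃ s, (evaln s c x).isSome := by
  rw [Part.dom_iff_mem]
  constructor
  · rintro ⟨y, hy⟩
    obtain ⟨s, hs⟩ := evaln_complete.1 hy
    exact ⟨s, Option.isSome_iff_exists.2 ⟨y, Option.mem_def.1 hs⟩⟩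
  · rintro ⟨s, hs⟩
    obtain ⟨y, hy⟩ := Option.isSome_iff_exists.1 hs
    exact ⟨y, evaln_sound (k := s) (Option.mem_def.2 hy)⟩

lemma rfind_const_dom (g : ℕ → Bool) :
    (Nat.rfind fun s => (g s : Part Bool)).Dom ↔ ∃ s, g s = true := by
  refine Iff.trans Nat.rfind_dom ?_
  constructor
  · rintro ⟨n, hn, -⟩
    exact ⟨n, by simpa using hn⟩
  · rintro ⟨s, hs⟩
    exact ⟨s, by simp [hs], fun {m} _ => by simp⟩

lemma not_T_ce : CEPred fun p : List ℕ × List Bool => ¬ T p.2 := by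
  refine ⟨fun p => (Nat.rfind fun s => (gfun p s : Part Bool)).map fun _ => (), ?_, ?_⟩
  · exact (Partrec.rfind (gfun_primrec.to_comp.partrec₂)).map
      ((Computable.const ()).comp Computable.fst).to₂
  · intro a
    have hdom : ((Nat.rfind fun s => (gfun a s : Part Bool)).map fun _ => ()).Dom
        ↔ ∃ s, gfun a s = true := rfind_const_dom (gfun a)
    rw [hdom]
    by_cases hg : good a.2 = true
    · have h2 : ∀ s, gfun a s
          = (evaln s (Denumerable.ofNat Code (cF a.2)) (Nat.pred (cT a.2))).isSome :=
        fun s => by simp [gfun, hg]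
      simp only [T, hg, true_and, not_not, h2]
      rw [eval_dom_iff_evaln]
    · have h0 : gfun a 0 = true := by
        have : good a.2 = false := Bool.not_eq_true _ ▸ Bool.eq_false_iff.2 (fun h => hg h)
        simp [gfun, this]
      constructor
      · intro _; exact ⟨0, h0⟩
      · intro _; simp [T, hg]

lemma Xset_Sigma : SigmaIn 1 PiPred Xset := by
  refine ⟨fun _ σ => T σ, not_T_ce, fun A => Iff.rfl⟩

/-! ### Diagonalization against Π⁰₂ definitions -/

def prefL (n k : ℕ) : List Bool := (List.range k).map fun i => decide (n ≤ i)

lemma prefL_primrec : Primrec₂ prefL :=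
  (Primrec.list_map (Primrec.list_range.comp Primrec.snd)
    ((PrimrecRel.comp Primrec.nat_le (Primrec.fst.comp Primrec.fst)
      Primrec.snd).decide.to₂)).to₂

def q0 (cR : Code) (N m k s : ℕ) : Bool :=
  decide (evaln s cR (Encodable.encode ((m, prefL N k) : ℕ × List Bool)) = some 1)

def q1 (cR : Code) (N m k t : ℕ) : Bool :=
  (List.range (t + 1)).any fun s => q0 cR N m k s

def q2 (cR : Code) (N m t : ℕ) : Bool :=
  (List.range (t + 1)).any fun k => q1 cR N m k t

def dB (cR : Code) (N x t : ℕ) : Bool :=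
  (List.range (x + 1)).all fun m => q2 cR N m t

lemma q0_primrec (cR : Code) :
    Primrec fun z : ℕ × ℕ × ℕ × ℕ => q0 cR z.1 z.2.1 z.2.2.1 z.2.2.2 := by
  have hN : Primrec fun z : ℕ × ℕ × ℕ × ℕ => z.1 := Primrec.fst
  have hm : Primrec fun z : ℕ × ℕ × ℕ × ℕ => z.2.1 := Primrec.fst.comp Primrec.snd
  have hk : Primrec fun z : ℕ × ℕ × ℕ × ℕ => z.2.2.1 :=
    Primrec.fst.comp (Primrec.snd.comp Primrec.snd)
  have hs : Primrec fun z : ℕ × ℕ × ℕ × ℕ => z.2.2.2 :=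
    Primrec.snd.comp (Primrec.snd.comp Primrec.snd)
  exact (PrimrecRel.comp Primrec.eq
    (primrec_evaln.comp ((hs.pair (Primrec.const cR)).pair
      (Primrec.encode.comp (hm.pair (prefL_primrec.comp hN hk)))))
    (Primrec.const (some 1))).decide

lemma q1_primrec (cR : Code) :
    Primrec fun z : ℕ × ℕ × ℕ × ℕ => q1 cR z.1 z.2.1 z.2.2.1 z.2.2.2 := by
  have ht : Primrec fun z : ℕ × ℕ × ℕ × ℕ => z.2.2.2 :=
    Primrec.snd.comp (Primrec.snd.comp Primrec.snd)
  exact primrec_list_any (Primrec.list_range.comp (Primrec.succ.comp ht))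
    (((q0_primrec cR).comp
      ((Primrec.fst.comp Primrec.fst).pair
        (((Primrec.fst.comp (Primrec.snd.comp Primrec.fst))).pair
          ((Primrec.fst.comp (Primrec.snd.comp (Primrec.snd.comp Primrec.fst))).pair
            Primrec.snd)))).to₂)

lemma q2_primrec (cR : Code) :
    Primrec fun z : ℕ × ℕ × ℕ => q2 cR z.1 z.2.1 z.2.2 := by
  have ht : Primrec fun z : ℕ × ℕ × ℕ => z.2.2 := Primrec.snd.comp Primrec.snd
  exact primrec_list_any (Primrec.list_range.comp (Primrec.succ.comp ht))
    (((q1_primrec cR).comp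
      ((Primrec.fst.comp Primrec.fst).pair
        ((Primrec.fst.comp (Primrec.snd.comp Primrec.fst)).pair
          (Primrec.snd.pair
            (Primrec.snd.comp (Primrec.snd.comp Primrec.fst)))))).to₂)

lemma dB_primrec (cR : Code) :
    Primrec fun z : ℕ × ℕ × ℕ => dB cR z.1 z.2.1 z.2.2 := by
  have hx : Primrec fun z : ℕ × ℕ × ℕ => z.2.1 := Primrec.fst.comp Primrec.snd
  exact primrec_list_all (Primrec.list_range.comp (Primrec.succ.comp hx))
    (((q2_primrec cR).comp
      ((Primrec.fst.comp Primrec.fst).pair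
        (Primrec.snd.pair
          (Primrec.snd.comp (Primrec.snd.comp Primrec.fst))))).to₂)

lemma dB_iff (cR : Code) (N x t : ℕ) :
    dB cR N x t = true ↔ ∀ m ≤ x, ∃ k ≤ t, ∃ s ≤ t,
      evaln s cR (Encodable.encode ((m, prefL N k) : ℕ × List Bool)) = some 1 := by
  simp [dB, q2, q1, q0, List.all_eq_true, List.any_eq_true, List.mem_range,
    Nat.lt_succ_iff, decide_eq_true_eq]
  exact forall₂_congr fun m _ => exists_congr fun k => and_congr_right fun _ =>
    exists_congr fun s => and_congr_right fun _ => decide_eq_true_iff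

end S1P1Aux

open S1P1Aux Nat.Partrec.Code
open Nat.Partrec (Code)

/-- There is a Σ⁰₁[Π⁰₁] class of infinite binary sequences that is not Π⁰₂,
even for Π⁰₂ definitions `{A | ∀ n, ∃ m, R n (A↾m) = true}` with a partial
computable predicate `R`. -/
theorem exists_Sigma01_Pi01_not_Pi02 :
    ∃ X : Set Cantor, SigmaIn 1 PiPred X ∧
      ¬ ∃ R : ℕ → List Bool →. Bool, Partrec₂ R ∧
          ∀ A : Cantor, A ∈ X ↔ ∀ n : ℕ, ∃ m : ℕ, true ∈ R n (pref A m) := by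
  refine ⟨Xset, Xset_Sigma, ?_⟩
  rintro ⟨R, hR, hXR⟩
  obtain ⟨cR, hcR⟩ := Nat.Partrec.Code.exists_code.1 hR
  -- membership in terms of the code for R
  have memR : ∀ (m : ℕ) (σ : List Bool),
      true ∈ R m σ ↔ 1 ∈ cR.eval (Encodable.encode ((m, σ) : ℕ × List Bool)) := by
    intro m σ
    have h1 : cR.eval (Encodable.encode ((m, σ) : ℕ × List Bool))
        = (R m σ).map Encodable.encode := by
      rw [hcR]; simp [Encodable.encodek]
    rw [h1, Part.mem_map_iff]
    constructor
    · intro h; exact ⟨true, h, rfl⟩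
    · rintro ⟨b, hb, he⟩
      cases b
      · simp [Encodable.encode_false] at he
      · exact hb
  -- the diagonal partial computable function
  have hH : Partrec₂ fun (c : Code) (x : ℕ) =>
      (Nat.rfind fun t => (dB cR (Encodable.encode c) x t : Part Bool)) := by
    apply Partrec.rfind
    exact Computable₂.partrec₂ (Primrec₂.to_comp
      (((dB_primrec cR).comp
        ((Primrec.encode.comp (Primrec.fst.comp Primrec.fst)).pair
          ((Primrec.snd.comp Primrec.fst).pair Primrec.snd))).to₂))
  obtain ⟨e, he⟩ := Nat.Partrec.Code.fixed_point₂ hH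
  set N := Encodable.encode e with hN
  have hofN : Denumerable.ofNat Code N = e := Denumerable.ofNat_encode e
  have hprefA : ∀ m, pref (fun i => decide (N ≤ i)) m = prefL N m := fun m => rfl
  have hmem : (∃ j, ¬ ((Denumerable.ofNat Code N).eval j).Dom)
      ↔ ∀ n, ∃ m, true ∈ R n (prefL N m) := by
    refine (mem_Xset N).symm.trans ((hXR _).trans ?_)
    simp only [hprefA]
  rw [hofN] at hmem
  by_cases hall : ∀ n, ∃ m, true ∈ R n (prefL N m)
  · obtain ⟨j, hj⟩ := hmem.2 hall
    apply hj
    have heval : e.eval j = Nat.rfind fun t => (dB cR N j t : Part Bool) :=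
      congrFun he j
    rw [heval]
    have key : ∀ m, ∃ k s,
        evaln s cR (Encodable.encode ((m, prefL N k) : ℕ × List Bool)) = some 1 := by
      intro m
      obtain ⟨k, hk⟩ := hall m
      obtain ⟨s, hs⟩ := evaln_complete.1 ((memR m (prefL N k)).1 hk)
      exact ⟨k, s, hs⟩
    choose K S hKS using key
    set t := (Finset.range (j + 1)).sup fun m => max (K m) (S m) with htdef
    have ht : ∀ m ≤ j, K m ≤ t ∧ S m ≤ t := by
      intro m hm
      have hle := Finset.le_sup (f := fun m => max (K m) (S m))
        (Finset.mem_range.2 (Nat.lt_succ_of_le hm))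
      exact ⟨le_trans (le_max_left _ _) hle, le_trans (le_max_right _ _) hle⟩
    refine Nat.rfind_dom.2 ⟨t, Part.mem_some_iff.2 ?_, fun {m} _ => trivial⟩
    symm
    rw [dB_iff]
    intro m hm
    exact ⟨K m, (ht m hm).1, S m, (ht m hm).2, hKS m⟩
  · push_neg at hall
    obtain ⟨m₀, hm₀⟩ := hall
    have htot : ∀ j, (e.eval j).Dom := by
      intro j
      by_contra h
      obtain ⟨k, hk⟩ := hmem.1 ⟨j, h⟩ m₀
      exact hm₀ k hk
    have hd := htot m₀
    rw [congrFun he m₀] at hd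
    obtain ⟨tt, htt⟩ := Part.dom_iff_mem.1 hd
    have hspec := Nat.rfind_spec htt
    have hdB : dB cR N m₀ tt = true := (Part.mem_some_iff.1 hspec).symm
    obtain ⟨k, -, s, -, hks⟩ := (dB_iff cR N m₀ tt).1 hdB m₀ (le_refl m₀)
    exact hm₀ k ((memR m₀ (prefL N k)).2 (evaln_sound (k := s) (Option.mem_def.2 hks)))
end
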